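/- The abelianization of the automorphism group of the binary rooted tree with m levels is isomorphic to (ℤ/2ℤ)^m. Equivalently, the abelianization of the m-fold iterated wreath product of ℤ/2ℤ with itself is (ℤ/2ℤ)^m. -/

import Mathlib

/-- `u` and `v` agree on their first `i` coordinates. -/
def agreesTo (m : ℕ) (u v : Fin m → Bool) (i : ℕ) : Prop :=
  ∀ j : Fin m, (j : ℕ) < i → u j = v j

/-- The automorphism group of the complete binary rooted tree of depth `m`, realized as
the group of permutations of the leaves (binary strings of length `m`) preserving the
depth of common prefixes. -/
def treeAut (m : ℕ) : Subgroup (Equiv.Perm (Fin m → Bool)) where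
  carrier := {σ | ∀ u v i, agreesTo m u v i ↔ agreesTo m (σ u) (σ v) i}
  one_mem' := by intro u v i; rfl
  mul_mem' := by
    intro a b ha hb u v i
    simpa [Equiv.Perm.mul_apply] using (hb u v i).trans (ha (b u) (b v) i)
  inv_mem' := by
    intro a ha u v i
    simpa [Equiv.Perm.mul_apply] using (ha (a⁻¹ u) (a⁻¹ v) i).symm

namespace Stmt17

variable {m : ℕ}

abbrev Leaf (m : ℕ) := Fin m → Bool

/-- extend a prefix of length `i` by `false`s -/
def ext (i : Fin m) (p : Fin (i : ℕ) → Bool) : Leaf m :=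
  fun j => if h : (j : ℕ) < (i : ℕ) then p ⟨j, h⟩ else false

lemma ext_lt (i : Fin m) (p : Fin (i : ℕ) → Bool) (j : Fin m) (h : (j : ℕ) < (i : ℕ)) :
    ext i p j = p ⟨j, h⟩ := dif_pos h

lemma ext_self (i : Fin m) (p : Fin (i : ℕ) → Bool) : ext i p i = false :=
  dif_neg (lt_irrefl _)

/-- local sign indicator at level `i` -/
def ez (σ : Equiv.Perm (Leaf m)) (i : Fin m) (u : Leaf m) : ZMod 2 :=
  if xor (σ u i) (u i) then 1 else 0

/-- total sign at level `i` -/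
def lvlSum (σ : Equiv.Perm (Leaf m)) (i : Fin m) : ZMod 2 :=
  ∑ p : Fin (i : ℕ) → Bool, ez σ i (ext i p)

lemma agreesTo_succ {u v : Leaf m} {i : Fin m} (h : agreesTo m u v i) (h' : u i = v i) :
    agreesTo m u v ((i : ℕ) + 1) := by
  intro j hj
  rcases lt_or_eq_of_le (Nat.lt_succ_iff.mp hj) with hj' | hj'
  · exact h j hj'
  · have : j = i := Fin.ext hj'
    subst this; exact h'

/-- Lemma A: the sign indicator only depends on the prefix. -/
lemma ez_congr {σ : Equiv.Perm (Leaf m)} (hσ : σ ∈ treeAut m) (i : Fin m) {u v : Leaf m}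
    (h : agreesTo m u v (i : ℕ)) : ez σ i u = ez σ i v := by
  have key : xor (σ u i) (u i) = xor (σ v i) (v i) := by
    by_cases huv : u i = v i
    · have h1 : agreesTo m u v ((i : ℕ) + 1) := agreesTo_succ h huv
      have h2 := (hσ u v ((i : ℕ) + 1)).1 h1 i (Nat.lt_succ_self _)
      rw [h2, huv]
    · have hag : agreesTo m (σ u) (σ v) (i : ℕ) := (hσ u v (i : ℕ)).1 h
      have hne : ¬ (σ u i = σ v i) := by
        intro he
        exact huv ((hσ u v ((i : ℕ) + 1)).2 (agreesTo_succ hag he) i (Nat.lt_succ_self _))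
      revert huv hne
      cases σ u i <;> cases σ v i <;> cases u i <;> cases v i <;> simp
  unfold ez; rw [key]

lemma xor_ite_add (a b c : Bool) :
    (if xor a c then (1 : ZMod 2) else 0) =
      (if xor a b then (1 : ZMod 2) else 0) + (if xor b c then (1 : ZMod 2) else 0) := by
  cases a <;> cases b <;> cases c <;> decide

lemma ez_mul (σ τ : Equiv.Perm (Leaf m)) (i : Fin m) (u : Leaf m) :
    ez (σ * τ) i u = ez σ i (τ u) + ez τ i u := by
  unfold ez
  simpa using xor_ite_add (σ (τ u) i) (τ u i) (u i)

/-- index lifting -/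
def liftIdx (i : Fin m) (j : Fin (i : ℕ)) : Fin m := ⟨j, j.2.trans i.2⟩

/-- the permutation induced on prefixes of length `i` -/
def pref (τ : Equiv.Perm (Leaf m)) (i : Fin m) (p : Fin (i : ℕ) → Bool) :
    Fin (i : ℕ) → Bool :=
  fun j => τ (ext i p) (liftIdx i j)

lemma agreesTo_ext_pref (τ : Equiv.Perm (Leaf m)) (i : Fin m) (p : Fin (i : ℕ) → Bool) :
    agreesTo m (τ (ext i p)) (ext i (pref τ i p)) (i : ℕ) := by
  intro j hj
  rw [ext_lt i _ j hj]
  show τ (ext i p) j = τ (ext i p) (liftIdx i ⟨j, hj⟩)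
  rfl

lemma pref_injective {τ : Equiv.Perm (Leaf m)} (hτ : τ ∈ treeAut m) (i : Fin m) :
    Function.Injective (pref τ i) := by
  intro p q hpq
  have hag : agreesTo m (τ (ext i p)) (τ (ext i q)) (i : ℕ) := by
    intro j hj
    have h1 := agreesTo_ext_pref τ i p j hj
    have h2 := agreesTo_ext_pref τ i q j hj
    rw [h1, h2, hpq]
  have := (hτ (ext i p) (ext i q) (i : ℕ)).2 hag
  funext j
  have := this (liftIdx i j) j.2
  rw [ext_lt i p _ j.2, ext_lt i q _ j.2] at this
  simpa [liftIdx] using this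

lemma lvlSum_mul {σ τ : Equiv.Perm (Leaf m)} (hσ : σ ∈ treeAut m) (hτ : τ ∈ treeAut m)
    (i : Fin m) : lvlSum (σ * τ) i = lvlSum σ i + lvlSum τ i := by
  unfold lvlSum
  have h1 : ∀ p : Fin (i : ℕ) → Bool,
      ez (σ * τ) i (ext i p) = ez σ i (ext i (pref τ i p)) + ez τ i (ext i p) := by
    intro p
    rw [ez_mul]
    congr 1
    exact ez_congr hσ i (agreesTo_ext_pref τ i p)
  simp only [h1, Finset.sum_add_distrib]
  congr 1
  exact Fintype.sum_equiv
    (Equiv.ofBijective (pref τ i) (Finite.injective_iff_bijective.mp (pref_injective hτ i)))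
    (fun p => ez σ i (ext i (pref τ i p))) (fun q => ez σ i (ext i q)) (fun p => rfl)


/-- the level-sign homomorphism -/
def phi : ↥(treeAut m) →* (Fin m → Multiplicative (ZMod 2)) :=
  MonoidHom.mk' (fun σ => fun i => Multiplicative.ofAdd (lvlSum σ.1 i))
    (by
      intro a b
      funext i
      show Multiplicative.ofAdd (lvlSum (a.1 * b.1) i) = _
      rw [lvlSum_mul a.2 b.2]
      rfl)

lemma phi_apply (σ : ↥(treeAut m)) (i : Fin m) :
    phi σ i = Multiplicative.ofAdd (lvlSum σ.1 i) := rfl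

/-- membership criterion using only the forward direction -/
lemma mem_treeAut_of_forward (σ : Equiv.Perm (Leaf m))
    (h1 : ∀ u v i, agreesTo m u v i → agreesTo m (σ u) (σ v) i)
    (h2 : ∀ u v i, agreesTo m u v i → agreesTo m (σ.symm u) (σ.symm v) i) :
    σ ∈ treeAut m := by
  intro u v i
  refine ⟨h1 u v i, fun h => ?_⟩
  simpa using h2 (σ u) (σ v) i h

/-- the underlying involution of the level-`i` generator -/
def genFun (i : Fin m) (u : Leaf m) : Leaf m :=
  fun j => if j = i ∧ (∀ j' : Fin m, (j' : ℕ) < (i : ℕ) → u j' = false) then !(u j) else u j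

lemma genFun_ne (i : Fin m) (u : Leaf m) (j : Fin m) (h : j ≠ i) : genFun i u j = u j := by
  unfold genFun
  simp [h]

lemma genFun_apply_self (i : Fin m) (u : Leaf m) :
    genFun i u i =
      if (∀ j' : Fin m, (j' : ℕ) < (i : ℕ) → u j' = false) then !(u i) else u i := by
  unfold genFun
  by_cases hc : ∀ j' : Fin m, (j' : ℕ) < (i : ℕ) → u j' = false
  · rw [if_pos ⟨rfl, hc⟩, if_pos hc]
  · rw [if_neg (fun h => hc h.2), if_neg hc]

lemma genFun_invol (i : Fin m) : Function.Involutive (genFun i) := by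
  intro u
  funext j
  by_cases hj : j = i
  · subst hj
    have hpre : ∀ j' : Fin m, (j' : ℕ) < (j : ℕ) → genFun j u j' = u j' := fun j' hj' =>
      genFun_ne j u j' (fun he => absurd hj' (by simp [he]))
    have hcond : (∀ j' : Fin m, (j' : ℕ) < (j : ℕ) → genFun j u j' = false) ↔
        (∀ j' : Fin m, (j' : ℕ) < (j : ℕ) → u j' = false) := by
      constructor <;> intro hc j' hj'
      · rw [← hpre j' hj']; exact hc j' hj'
      · rw [hpre j' hj']; exact hc j' hj'
    show genFun j (genFun j u) j = u j
    rw [genFun_apply_self, genFun_apply_self]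
    by_cases hc : ∀ j' : Fin m, (j' : ℕ) < (j : ℕ) → u j' = false
    · rw [if_pos (hcond.mpr hc), if_pos hc, Bool.not_not]
    · rw [if_neg (fun h => hc (hcond.mp h)), if_neg hc]
  · rw [genFun_ne i _ j hj, genFun_ne i u j hj]

/-- the generator flipping the subtree at the all-`false` node of level `i` -/
def genPerm (i : Fin m) : Equiv.Perm (Leaf m) := (genFun_invol i).toPerm

lemma genPerm_apply (i : Fin m) (u : Leaf m) : genPerm i u = genFun i u := rfl

lemma genPerm_forward (i : Fin m) :
    ∀ u v k, agreesTo m u v k → agreesTo m (genFun i u) (genFun i v) k := by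
  intro u v k h j hj
  by_cases hji : j = i
  · subst hji
    have hcond : (∀ j' : Fin m, (j' : ℕ) < (j : ℕ) → u j' = false) ↔
        (∀ j' : Fin m, (j' : ℕ) < (j : ℕ) → v j' = false) := by
      constructor <;> intro hc j' hj'
      · rw [← h j' (hj'.trans hj)]; exact hc j' hj'
      · rw [h j' (hj'.trans hj)]; exact hc j' hj'
    rw [genFun_apply_self, genFun_apply_self, h j hj]
    by_cases hc : ∀ j' : Fin m, (j' : ℕ) < (j : ℕ) → v j' = false
    · rw [if_pos (hcond.mpr hc), if_pos hc]
    · rw [if_neg (fun hh => hc (hcond.mp hh)), if_neg hc]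
  · rw [genFun_ne i u j hji, genFun_ne i v j hji]; exact h j hj

lemma genPerm_mem (i : Fin m) : genPerm i ∈ treeAut m := by
  apply mem_treeAut_of_forward
  · exact genPerm_forward i
  · intro u v k h
    have hs : (genPerm i).symm = genPerm i := Function.Involutive.toPerm_symm _
    rw [hs]
    exact genPerm_forward i u v k h

lemma lvlSum_genPerm (i k : Fin m) :
    lvlSum (genPerm i) k = if k = i then 1 else 0 := by
  unfold lvlSum
  by_cases hk : k = i
  · subst hk
    rw [if_pos rfl]
    have hterm : ∀ p : Fin (k : ℕ) → Bool,
        ez (genPerm k) k (ext k p) = if p = (fun _ => false) then 1 else 0 := by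
      intro p
      unfold ez
      rw [ext_self, Bool.xor_false, genPerm_apply, genFun_apply_self, ext_self]
      have hCiff : (∀ j' : Fin m, (j' : ℕ) < (k : ℕ) → ext k p j' = false) ↔
          p = (fun _ => false) := by
        constructor
        · intro hc
          funext j'
          have := hc (liftIdx k j') j'.2
          rwa [ext_lt k p _ j'.2] at this
        · intro hp j' hj'
          rw [ext_lt k p j' hj', hp]
      by_cases hp : p = (fun _ => false)
      · rw [if_pos (hCiff.mpr hp), if_pos hp]; simp
      · rw [if_neg (fun h => hp (hCiff.mp h)), if_neg hp]; simp
    simp only [hterm]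
    rw [Finset.sum_ite_eq' Finset.univ]
    simp
  · rw [if_neg hk]
    apply Finset.sum_eq_zero
    intro p _
    unfold ez
    rw [genPerm_apply, genFun_ne i _ k hk]
    simp

lemma phi_surjective : Function.Surjective (phi (m := m)) := by
  have hmem : ∀ y : Fin m → Multiplicative (ZMod 2), y ∈ (phi (m := m)).range := by
    intro y
    have : y = ∏ i : Fin m, Pi.mulSingle i (y i) := by
      rw [Finset.univ_prod_mulSingle]
    rw [this]
    apply Subgroup.prod_mem
    intro i _
    have h2 : ∀ x : ZMod 2, x = 0 ∨ x = 1 := by decide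
    rcases h2 (Multiplicative.toAdd (y i)) with h | h
    · have : y i = 1 := by
        have := congrArg Multiplicative.ofAdd h
        simpa using this
      rw [this, Pi.mulSingle_one]
      exact one_mem _
    · have hyi : y i = Multiplicative.ofAdd (1 : ZMod 2) := by
        have := congrArg Multiplicative.ofAdd h
        simpa using this
      rw [hyi]
      refine ⟨⟨genPerm i, genPerm_mem i⟩, ?_⟩
      funext k
      rw [phi_apply]
      show Multiplicative.ofAdd (lvlSum (genPerm i) k) = _
      rw [lvlSum_genPerm]
      by_cases hk : k = i
      · subst hk; simp [Pi.mulSingle_eq_same]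
      · rw [if_neg hk, Pi.mulSingle_eq_of_ne hk]
        rfl
  intro y
  exact hmem y


lemma ext_not_lt (i : Fin m) (p : Fin (i : ℕ) → Bool) (j : Fin m) (h : ¬ (j : ℕ) < (i : ℕ)) :
    ext i p j = false := dif_neg h

/-! ### Embedding of level-`m` automorphisms into one branch -/

def embPerm (b : Bool) (τ : Equiv.Perm (Leaf m)) : Equiv.Perm (Leaf (m + 1)) where
  toFun u := if u 0 = b then Fin.cons (u 0) (τ (Fin.tail u)) else u
  invFun u := if u 0 = b then Fin.cons (u 0) (τ.symm (Fin.tail u)) else u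
  left_inv := by
    intro u
    dsimp only
    by_cases h : u 0 = b
    · rw [if_pos h]
      rw [if_pos (show (Fin.cons (u 0) (τ (Fin.tail u)) : Leaf (m + 1)) 0 = b by
        rw [Fin.cons_zero]; exact h)]
      rw [Fin.cons_zero, Fin.tail_cons, Equiv.symm_apply_apply, Fin.cons_self_tail]
    · rw [if_neg h, if_neg h]
  right_inv := by
    intro u
    dsimp only
    by_cases h : u 0 = b
    · rw [if_pos h]
      rw [if_pos (show (Fin.cons (u 0) (τ.symm (Fin.tail u)) : Leaf (m + 1)) 0 = b by
        rw [Fin.cons_zero]; exact h)]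
      rw [Fin.cons_zero, Fin.tail_cons, Equiv.apply_symm_apply, Fin.cons_self_tail]
    · rw [if_neg h, if_neg h]

lemma embPerm_apply_of_eq (b : Bool) (τ : Equiv.Perm (Leaf m)) {u : Leaf (m + 1)}
    (h : u 0 = b) : embPerm b τ u = Fin.cons (u 0) (τ (Fin.tail u)) := if_pos h

lemma embPerm_apply_of_ne (b : Bool) (τ : Equiv.Perm (Leaf m)) {u : Leaf (m + 1)}
    (h : ¬ u 0 = b) : embPerm b τ u = u := if_neg h

lemma embPerm_apply_zero (b : Bool) (τ : Equiv.Perm (Leaf m)) (u : Leaf (m + 1)) :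
    embPerm b τ u 0 = u 0 := by
  by_cases h : u 0 = b
  · rw [embPerm_apply_of_eq b τ h, Fin.cons_zero]
  · rw [embPerm_apply_of_ne b τ h]

lemma embPerm_symm (b : Bool) (τ : Equiv.Perm (Leaf m)) :
    (embPerm b τ).symm = embPerm b τ.symm := rfl

lemma embPerm_mul (b : Bool) (τ₁ τ₂ : Equiv.Perm (Leaf m)) :
    embPerm b (τ₁ * τ₂) = embPerm b τ₁ * embPerm b τ₂ := by
  apply Equiv.ext
  intro u
  show embPerm b (τ₁ * τ₂) u = embPerm b τ₁ (embPerm b τ₂ u)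
  by_cases h : u 0 = b
  · rw [embPerm_apply_of_eq b _ h, embPerm_apply_of_eq b _ h]
    rw [embPerm_apply_of_eq b τ₁ (show (Fin.cons (u 0) (τ₂ (Fin.tail u)) : Leaf (m + 1)) 0 = b by
      rw [Fin.cons_zero]; exact h)]
    rw [Fin.cons_zero, Fin.tail_cons]
    rfl
  · rw [embPerm_apply_of_ne b _ h, embPerm_apply_of_ne b _ h, embPerm_apply_of_ne b _ h]

lemma agreesTo_cons {u v : Leaf (m + 1)} {k : ℕ} (h0 : u 0 = v 0)
    (h : agreesTo m (Fin.tail u) (Fin.tail v) k) : agreesTo (m + 1) u v (k + 1) := by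
  intro j hj
  induction j using Fin.cases with
  | zero => exact h0
  | succ j' =>
      have hj' : (j' : ℕ) < k := by
        have : (j' : ℕ) + 1 < k + 1 := by simpa [Fin.val_succ] using hj
        omega
      exact h j' hj'

lemma agreesTo_tail {u v : Leaf (m + 1)} {k : ℕ} (h : agreesTo (m + 1) u v (k + 1)) :
    agreesTo m (Fin.tail u) (Fin.tail v) k := by
  intro j hj
  exact h j.succ (by simpa [Fin.val_succ] using Nat.succ_lt_succ hj)

lemma embPerm_forward {τ : Equiv.Perm (Leaf m)} (hτ : τ ∈ treeAut m) (b : Bool) :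
    ∀ u v k, agreesTo (m + 1) u v k →
      agreesTo (m + 1) (embPerm b τ u) (embPerm b τ v) k := by
  intro u v k h j hj
  induction j using Fin.cases with
  | zero => rw [embPerm_apply_zero, embPerm_apply_zero]; exact h 0 hj
  | succ j' =>
      have hk : 0 < k := lt_of_le_of_lt (Nat.zero_le _) hj
      have h0 : u 0 = v 0 := h 0 (by simpa using hk)
      by_cases hb : u 0 = b
      · have hb' : v 0 = b := h0 ▸ hb
        rw [embPerm_apply_of_eq b τ hb, embPerm_apply_of_eq b τ hb']
        rw [Fin.cons_succ, Fin.cons_succ]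
        have htail : agreesTo m (Fin.tail u) (Fin.tail v) (k - 1) := by
          intro j'' hj''
          exact h j''.succ (by simp only [Fin.val_succ]; omega)
        have hj2 : (j' : ℕ) + 1 < k := by simpa [Fin.val_succ] using hj
        exact (hτ (Fin.tail u) (Fin.tail v) (k - 1)).1 htail j' (by omega)
      · have hb' : ¬ v 0 = b := h0 ▸ hb
        rw [embPerm_apply_of_ne b τ hb, embPerm_apply_of_ne b τ hb']
        exact h j'.succ hj

lemma embPerm_mem {τ : Equiv.Perm (Leaf m)} (hτ : τ ∈ treeAut m) (b : Bool) :
    embPerm b τ ∈ treeAut (m + 1) := by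
  apply mem_treeAut_of_forward
  · exact embPerm_forward hτ b
  · rw [embPerm_symm]
    have hτ' : τ.symm ∈ treeAut m := by
      rw [← Equiv.Perm.inv_def]
      exact (treeAut m).inv_mem hτ
    exact embPerm_forward hτ' b

/-! ### Restriction to a branch -/

lemma symm_fix {σ : Equiv.Perm (Leaf (m + 1))} (hfix : ∀ u, σ u 0 = u 0) :
    ∀ u, σ.symm u 0 = u 0 := by
  intro u
  conv_rhs => rw [← Equiv.apply_symm_apply σ u]
  rw [hfix]

def resPerm (σ : Equiv.Perm (Leaf (m + 1))) (hfix : ∀ u, σ u 0 = u 0) (b : Bool) :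
    Equiv.Perm (Leaf m) where
  toFun w := Fin.tail (σ (Fin.cons b w))
  invFun w := Fin.tail (σ.symm (Fin.cons b w))
  left_inv := by
    intro w
    dsimp only
    have h0 : σ (Fin.cons b w) 0 = b := by rw [hfix]; exact Fin.cons_zero _ _
    have hc : Fin.cons b (Fin.tail (σ (Fin.cons b w))) = σ (Fin.cons b w) := by
      conv_rhs => rw [← Fin.cons_self_tail (σ (Fin.cons b w))]
      rw [h0]
    rw [hc, Equiv.symm_apply_apply, Fin.tail_cons]
  right_inv := by
    intro w
    dsimp only
    have h0 : σ.symm (Fin.cons b w) 0 = b := by rw [symm_fix hfix]; exact Fin.cons_zero _ _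
    have hc : Fin.cons b (Fin.tail (σ.symm (Fin.cons b w))) = σ.symm (Fin.cons b w) := by
      conv_rhs => rw [← Fin.cons_self_tail (σ.symm (Fin.cons b w))]
      rw [h0]
    rw [hc, Equiv.apply_symm_apply, Fin.tail_cons]

lemma res_forward {σ : Equiv.Perm (Leaf (m + 1))} (hσ : σ ∈ treeAut (m + 1)) (b : Bool) :
    ∀ w w' k, agreesTo m w w' k →
      agreesTo m (Fin.tail (σ (Fin.cons b w))) (Fin.tail (σ (Fin.cons b w'))) k := by
  intro w w' k h
  have hcons : agreesTo (m + 1) (Fin.cons b w) (Fin.cons b w') (k + 1) :=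
    agreesTo_cons (by rw [Fin.cons_zero, Fin.cons_zero]) (by rwa [Fin.tail_cons, Fin.tail_cons])
  exact agreesTo_tail ((hσ _ _ (k + 1)).1 hcons)

lemma resPerm_mem {σ : Equiv.Perm (Leaf (m + 1))} (hσ : σ ∈ treeAut (m + 1))
    (hfix : ∀ u, σ u 0 = u 0) (b : Bool) : resPerm σ hfix b ∈ treeAut m := by
  apply mem_treeAut_of_forward
  · exact res_forward hσ b
  · have hσ' : σ.symm ∈ treeAut (m + 1) := by
      rw [← Equiv.Perm.inv_def]
      exact (treeAut (m + 1)).inv_mem hσ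
    exact res_forward hσ' b

lemma decomp {σ : Equiv.Perm (Leaf (m + 1))} (hfix : ∀ u, σ u 0 = u 0) :
    σ = embPerm false (resPerm σ hfix false) * embPerm true (resPerm σ hfix true) := by
  apply Equiv.ext
  intro u
  show σ u = embPerm false _ (embPerm true _ u)
  have hcons : ∀ b, u 0 = b → Fin.cons b (Fin.tail u) = u := by
    intro b hb
    rw [← hb, Fin.cons_self_tail]
  cases hb : u 0 with
  | true =>
      rw [embPerm_apply_of_eq true _ hb]
      have : (Fin.cons (u 0) (resPerm σ hfix true (Fin.tail u)) : Leaf (m + 1)) 0 = true := by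
        rw [Fin.cons_zero]; exact hb
      rw [embPerm_apply_of_ne false _ (by rw [this]; simp)]
      show σ u = Fin.cons (u 0) (Fin.tail (σ (Fin.cons true (Fin.tail u))))
      rw [hcons true hb]
      conv_lhs => rw [← Fin.cons_self_tail (σ u), hfix u]
  | false =>
      rw [embPerm_apply_of_ne true _ (by rw [hb]; simp)]
      rw [embPerm_apply_of_eq false _ hb]
      show σ u = Fin.cons (u 0) (Fin.tail (σ (Fin.cons false (Fin.tail u))))
      rw [hcons false hb]
      conv_lhs => rw [← Fin.cons_self_tail (σ u), hfix u]

/-! ### The root swap conjugates the branches into each other -/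

lemma genFun_zero (u : Leaf (m + 1)) (j : Fin (m + 1)) :
    genFun (0 : Fin (m + 1)) u j = if j = 0 then !(u j) else u j := by
  unfold genFun
  by_cases hj : j = (0 : Fin (m + 1))
  · rw [if_pos ⟨hj, fun j' hj' => absurd hj' (by simp)⟩, if_pos hj]
  · rw [if_neg (fun h => hj h.1), if_neg hj]

lemma genPerm_inv (i : Fin m) : (genPerm i)⁻¹ = genPerm i := by
  have : (genPerm i).symm = genPerm i := Function.Involutive.toPerm_symm _
  exact this

lemma tail_genPerm_zero (u : Leaf (m + 1)) :
    Fin.tail (genPerm (0 : Fin (m + 1)) u) = Fin.tail u := by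
  funext j'
  show genFun (0 : Fin (m + 1)) u j'.succ = u j'.succ
  rw [genFun_zero, if_neg (Fin.succ_ne_zero j')]

lemma genPerm_zero_apply_zero (u : Leaf (m + 1)) :
    genPerm (0 : Fin (m + 1)) u 0 = !(u 0) := by
  show genFun (0 : Fin (m + 1)) u 0 = !(u 0)
  rw [genFun_zero, if_pos rfl]

lemma emb_conj (τ : Equiv.Perm (Leaf m)) :
    genPerm (0 : Fin (m + 1)) * embPerm false τ * genPerm (0 : Fin (m + 1)) =
      embPerm true τ := by
  apply Equiv.ext
  intro u
  show genPerm 0 (embPerm false τ (genPerm 0 u)) = embPerm true τ u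
  cases hb : u 0 with
  | true =>
      have hsu : genPerm (0 : Fin (m + 1)) u 0 = false := by
        rw [genPerm_zero_apply_zero, hb]; rfl
      rw [embPerm_apply_of_eq false τ hsu, hsu, tail_genPerm_zero]
      rw [embPerm_apply_of_eq true τ hb, hb]
      funext j
      induction j using Fin.cases with
      | zero =>
          rw [genPerm_apply, genFun_zero, if_pos rfl, Fin.cons_zero, Fin.cons_zero]
          rfl
      | succ j' =>
          rw [genPerm_apply, genFun_zero, if_neg (Fin.succ_ne_zero j'), Fin.cons_succ,
            Fin.cons_succ]
  | false =>
      have hsu : genPerm (0 : Fin (m + 1)) u 0 = true := by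
        rw [genPerm_zero_apply_zero, hb]; rfl
      rw [embPerm_apply_of_ne false τ (by rw [hsu]; simp)]
      rw [embPerm_apply_of_ne true τ (by rw [hb]; simp)]
      exact genFun_invol 0 u


/-! ### Level sums of embedded automorphisms -/

lemma tail_ext (i' : Fin m) (b₀ : Bool) (q : Fin (i' : ℕ) → Bool) :
    Fin.tail (ext i'.succ (Fin.cons b₀ q)) = ext i' q := by
  funext j'
  show ext i'.succ (Fin.cons b₀ q) j'.succ = ext i' q j'
  by_cases hj : (j' : ℕ) < (i' : ℕ)
  · rw [ext_lt i' q j' hj]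
    rw [ext_lt i'.succ _ j'.succ (by simp only [Fin.val_succ]; omega)]
    exact Fin.cons_succ (α := fun _ : Fin ((i' : ℕ) + 1) => Bool) b₀ q ⟨(j' : ℕ), hj⟩
  · rw [ext_not_lt i' q j' hj]
    rw [ext_not_lt i'.succ _ j'.succ (by simp only [Fin.val_succ]; omega)]

lemma ext_succ_zero (i' : Fin m) (b₀ : Bool) (q : Fin (i' : ℕ) → Bool) :
    ext i'.succ (Fin.cons b₀ q) (0 : Fin (m + 1)) = b₀ := by
  rw [ext_lt i'.succ _ 0 (by simp only [Fin.val_succ, Fin.val_zero]; omega)]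
  exact Fin.cons_zero (α := fun _ : Fin ((i' : ℕ) + 1) => Bool) b₀ q

lemma ez_emb (b b₀ : Bool) (τ : Equiv.Perm (Leaf m)) (i' : Fin m) (q : Fin (i' : ℕ) → Bool) :
    ez (embPerm b τ) i'.succ (ext i'.succ (Fin.cons b₀ q)) =
      if b₀ = b then ez τ i' (ext i' q) else 0 := by
  set u : Leaf (m + 1) := ext i'.succ (Fin.cons b₀ q) with hu
  have h0 : u 0 = b₀ := ext_succ_zero i' b₀ q
  have hself : u i'.succ = false := ext_self i'.succ _
  by_cases hb : b₀ = b
  · rw [if_pos hb]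
    unfold ez
    rw [embPerm_apply_of_eq b τ (by rw [h0]; exact hb)]
    rw [Fin.cons_succ, hself, hu, tail_ext, ext_self]
  · rw [if_neg hb]
    unfold ez
    rw [embPerm_apply_of_ne b τ (by rw [h0]; exact hb)]
    rw [hself]
    simp

lemma lvlSum_emb_succ (b : Bool) (τ : Equiv.Perm (Leaf m)) (i' : Fin m) :
    lvlSum (embPerm b τ) i'.succ = lvlSum τ i' := by
  unfold lvlSum
  have e := Fin.consEquiv (fun _ : Fin ((i' : ℕ) + 1) => Bool)
  have h1 : (∑ p : Fin ((i'.succ : Fin (m + 1)) : ℕ) → Bool,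
        ez (embPerm b τ) i'.succ (ext i'.succ p)) =
      ∑ x : Bool × (Fin ((i' : ℕ)) → Bool),
        ez (embPerm b τ) i'.succ
          (ext i'.succ (Fin.consEquiv (fun _ : Fin ((i' : ℕ) + 1) => Bool) x)) :=
    (Equiv.sum_comp (Fin.consEquiv (fun _ : Fin ((i' : ℕ) + 1) => Bool))
      (fun p => ez (embPerm b τ) i'.succ (ext i'.succ p))).symm
  rw [h1, Fintype.sum_prod_type]
  have hterm : ∀ (b₀ : Bool) (q : Fin (i' : ℕ) → Bool),
      ez (embPerm b τ) i'.succ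
          (ext i'.succ ((Fin.consEquiv (fun _ : Fin ((i' : ℕ) + 1) => Bool)) (b₀, q))) =
        if b₀ = b then ez τ i' (ext i' q) else 0 := by
    intro b₀ q
    exact ez_emb b b₀ τ i' q
  simp only [hterm]
  rw [Finset.sum_comm]
  -- now sum over q of sum over b₀
  have : ∀ q : Fin (i' : ℕ) → Bool,
      (∑ b₀ : Bool, if b₀ = b then ez τ i' (ext i' q) else 0) = ez τ i' (ext i' q) := by
    intro q
    rw [Finset.sum_ite_eq' Finset.univ b (fun _ => ez τ i' (ext i' q))]
    simp
  simp only [this]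

lemma lvlSum_emb_zero (b : Bool) (τ : Equiv.Perm (Leaf m)) :
    lvlSum (embPerm b τ) (0 : Fin (m + 1)) = 0 := by
  unfold lvlSum
  apply Finset.sum_eq_zero
  intro p _
  unfold ez
  rw [embPerm_apply_zero]
  simp

lemma fix_of_lvlSum_zero {σ : Equiv.Perm (Leaf (m + 1))} (hσ : σ ∈ treeAut (m + 1))
    (h : lvlSum σ (0 : Fin (m + 1)) = 0) : ∀ u, σ u 0 = u 0 := by
  have hcard : Fintype.card (Fin (((0 : Fin (m + 1)) : ℕ)) → Bool) = 1 := by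
    rw [Fintype.card_fun]
    simp
    exact Fintype.card_eq_zero
  intro u
  have hall : ∀ p : Fin (((0 : Fin (m + 1)) : ℕ)) → Bool,
      ez σ 0 (ext (0 : Fin (m + 1)) p) = ez σ 0 u := by
    intro p
    exact ez_congr hσ 0 (fun j hj => absurd hj (by simp))
  have hez : ez σ 0 u = 0 := by
    have h1 : lvlSum σ (0 : Fin (m + 1)) =
        Fintype.card (Fin (((0 : Fin (m + 1)) : ℕ)) → Bool) • ez σ 0 u := by
      unfold lvlSum
      rw [Finset.sum_congr rfl (fun p _ => hall p), Finset.sum_const, Finset.card_univ]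
    rw [h1, hcard, one_smul] at h
    exact h
  unfold ez at hez
  by_cases hx : xor (σ u 0) (u 0) = true
  · rw [if_pos hx] at hez
    exact absurd hez one_ne_zero
  · have : xor (σ u 0) (u 0) = false := by
      cases hxx : xor (σ u 0) (u 0)
      · rfl
      · exact absurd hxx hx
    cases h1 : σ u 0 <;> cases h2 : u 0 <;> simp_all

/-! ### Subgroup-level machinery -/

def embH (b : Bool) : ↥(treeAut m) →* ↥(treeAut (m + 1)) :=
  MonoidHom.mk' (fun τ => ⟨embPerm b τ.1, embPerm_mem τ.2 b⟩)
    (by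
      intro a c
      exact Subtype.ext (embPerm_mul b a.1 c.1))

lemma of_conj {G : Type*} [Group G] (s x : G) :
    Abelianization.of (s * x * s⁻¹) = Abelianization.of x := by
  rw [map_mul, map_mul, map_inv]
  rw [mul_comm (Abelianization.of s) (Abelianization.of x)]
  rw [mul_assoc, mul_inv_cancel, mul_one]

lemma ofAdd_eq_one_iff (a : ZMod 2) : Multiplicative.ofAdd a = 1 ↔ a = 0 := by
  constructor
  · intro h
    have := congrArg Multiplicative.toAdd h
    simpa using this
  · intro h
    rw [h]
    rfl

lemma ker_le : ∀ (n : ℕ) (x : ↥(treeAut n)), phi x = 1 → Abelianization.of x = 1 := by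
  intro n
  induction n with
  | zero =>
      intro x _
      have hx1 : x = 1 := by
        apply Subtype.ext
        apply Equiv.ext
        intro u
        exact Subsingleton.elim _ _
      rw [hx1, map_one]
  | succ n ih =>
      rintro ⟨σ, hσ⟩ hx
      have h0 : lvlSum σ (0 : Fin (n + 1)) = 0 := by
        have := congrFun hx (0 : Fin (n + 1))
        rw [phi_apply] at this
        exact (ofAdd_eq_one_iff _).1 this
      have hfix : ∀ u, σ u 0 = u 0 := fix_of_lvlSum_zero hσ h0
      have hrf : resPerm σ hfix false ∈ treeAut n := resPerm_mem hσ hfix false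
      have hrt : resPerm σ hfix true ∈ treeAut n := resPerm_mem hσ hfix true
      have hdec : σ = embPerm false (resPerm σ hfix false) *
          embPerm true (resPerm σ hfix true) := decomp hfix
      have hx2 : (⟨σ, hσ⟩ : ↥(treeAut (n + 1))) =
          embH false ⟨resPerm σ hfix false, hrf⟩ * embH true ⟨resPerm σ hfix true, hrt⟩ :=
        Subtype.ext hdec
      have hprod : phi (⟨resPerm σ hfix false, hrf⟩ * ⟨resPerm σ hfix true, hrt⟩ :
          ↥(treeAut n)) = 1 := by
        funext i'
        have hsucc := congrFun hx i'.succ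
        rw [phi_apply] at hsucc
        have hs0 : lvlSum σ i'.succ = 0 := (ofAdd_eq_one_iff _).1 hsucc
        rw [hdec, lvlSum_mul (embPerm_mem hrf false) (embPerm_mem hrt true),
          lvlSum_emb_succ false _ i', lvlSum_emb_succ true _ i'] at hs0
        rw [phi_apply]
        show Multiplicative.ofAdd
          (lvlSum (resPerm σ hfix false * resPerm σ hfix true) i') = 1
        rw [lvlSum_mul hrf hrt, hs0]
        rfl
      have hIH := ih _ hprod
      have hembf : Abelianization.of
          (embH false (⟨resPerm σ hfix false, hrf⟩ * ⟨resPerm σ hfix true, hrt⟩)) = 1 := by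
        have hc := congrArg
          (Abelianization.lift ((Abelianization.of).comp (embH (m := n) false))) hIH
        rwa [Abelianization.lift_apply_of, map_one, MonoidHom.comp_apply] at hc
      have hconj : (embH true ⟨resPerm σ hfix true, hrt⟩ : ↥(treeAut (n + 1))) =
          ⟨genPerm 0, genPerm_mem 0⟩ * embH false ⟨resPerm σ hfix true, hrt⟩ *
            (⟨genPerm 0, genPerm_mem 0⟩ : ↥(treeAut (n + 1)))⁻¹ := by
        apply Subtype.ext
        show embPerm true (resPerm σ hfix true) =
          genPerm 0 * embPerm false (resPerm σ hfix true) * (genPerm 0)⁻¹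
        rw [genPerm_inv]
        exact (emb_conj (resPerm σ hfix true)).symm
      rw [hx2, map_mul, hconj, of_conj, ← map_mul, ← map_mul]
      exact hembf

theorem stmt17' (m : ℕ) :
    Nonempty (Abelianization (treeAut m) ≃* (Fin m → Multiplicative (ZMod 2))) := by
  refine ⟨MulEquiv.ofBijective (Abelianization.lift (phi (m := m))) ⟨?_, ?_⟩⟩
  · rw [injective_iff_map_eq_one]
    intro a ha
    obtain ⟨x, rfl⟩ : ∃ y, Abelianization.of y = a := by
      exact Quotient.exists_rep a
    rw [Abelianization.lift_apply_of] at ha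
    exact ker_le m x ha
  · intro y
    obtain ⟨x, hx⟩ := phi_surjective y
    exact ⟨Abelianization.of x, by rwa [Abelianization.lift_apply_of]⟩

end Stmt17

/-- The abelianization of the automorphism group of the binary rooted tree with `m`
levels is isomorphic to `(ℤ/2ℤ)^m`. -/
theorem stmt17 (m : ℕ) :
    Nonempty (Abelianization (treeAut m) ≃* (Fin m → Multiplicative (ZMod 2))) := by
  exact Stmt17.stmt17' m
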